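/- Let a, b, c, d, e, f be six pairwise distinct integers. Define the parity of a triple (x, y, z) of distinct integers as the parity (element of ℤ/2) of the number of inversions among its entries, i.e., the number of pairs of positions i < j whose entries satisfy (entry at i) > (entry at j), taken mod 2. Then there exist x ∈ {a, b, c} and y ∈ {d, e, f} such that exchanging x and y between the two triples (keeping all other entries in place) flips the parity of both the triple (a, b, c) and the triple (d, e, f). -/

import Mathlib

/-- The parity (in ℤ/2) of the number of inversions of a triple of integers,
i.e. the number of pairs of positions `i < j` whose entries satisfy
(entry at `i`) > (entry at `j`), taken mod 2. -/
def tripleParity (t : Fin 3 → ℤ) : ZMod 2 :=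
  ((Finset.univ.filter fun p : Fin 3 × Fin 3 => p.1 < p.2 ∧ t p.2 < t p.1).card : ZMod 2)

/-- Inversion parity of a triple in `Fin 6`, as a boolean. -/
def tpb (x y z : Fin 6) : Bool := (decide (y < x)).xor ((decide (z < x)).xor (decide (z < y)))

/-- Whether some swap between the two triples flips both parities. -/
def ok (a b c d e f : Fin 6) : Bool :=
  ((tpb d b c != tpb a b c) && (tpb a e f != tpb d e f)) ||
  ((tpb e b c != tpb a b c) && (tpb d a f != tpb d e f)) ||
  ((tpb f b c != tpb a b c) && (tpb d e a != tpb d e f)) ||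
  ((tpb a d c != tpb a b c) && (tpb b e f != tpb d e f)) ||
  ((tpb a e c != tpb a b c) && (tpb d b f != tpb d e f)) ||
  ((tpb a f c != tpb a b c) && (tpb d e b != tpb d e f)) ||
  ((tpb a b d != tpb a b c) && (tpb c e f != tpb d e f)) ||
  ((tpb a b e != tpb a b c) && (tpb d c f != tpb d e f)) ||
  ((tpb a b f != tpb a b c) && (tpb d e c != tpb d e f))

/-- `ok` holds, or some two of the six values coincide. -/
def ok2 (a b c d e f : Fin 6) : Bool :=
  (a == b) || (a == c) || (a == d) || (a == e) || (a == f) || (b == c) || (b == d) ||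
  (b == e) || (b == f) || (c == d) || (c == e) || (c == f) || (d == e) || (d == f) ||
  (e == f) || ok a b c d e f

set_option maxHeartbeats 4000000 in
theorem key : ∀ a b c d e f : Fin 6, ok2 a b c d e f = true := by decide

lemma tripleParity_eq (x y z : ℤ) : tripleParity ![x,y,z] =
    (if y < x then (1:ZMod 2) else 0) + (if z < x then 1 else 0) + (if z < y then 1 else 0) := by
  rw [tripleParity, Finset.card_filter]
  push_cast
  rw [Fintype.sum_prod_type]
  rw [Fin.sum_univ_three]
  simp only [Fin.sum_univ_three]
  norm_num [Fin.lt_def]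
  rfl

lemma bridge (u v w : Fin 6) (x y z : ℤ) (h1 : y < x ↔ v < u) (h2 : z < x ↔ w < u)
    (h3 : z < y ↔ w < v) :
    tripleParity ![x,y,z] = if tpb u v w then 1 else 0 := by
  rw [tripleParity_eq]
  simp only [h1, h2, h3, tpb]
  by_cases a1 : v < u <;> by_cases a2 : w < u <;> by_cases a3 : w < v <;>
    simp [a1, a2, a3] <;> decide

lemma upd0 (x y z w : ℤ) : Function.update ![x,y,z] (0 : Fin 3) w = ![w,y,z] := by
  ext i; fin_cases i <;> simp [Function.update]
lemma upd1 (x y z w : ℤ) : Function.update ![x,y,z] (1 : Fin 3) w = ![x,w,z] := by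
  ext i; fin_cases i <;> simp [Function.update]
lemma upd2 (x y z w : ℤ) : Function.update ![x,y,z] (2 : Fin 3) w = ![x,y,w] := by
  ext i; fin_cases i <;> simp [Function.update]

lemma final {p q : Bool} (h : ¬ p = q) :
    (if p then (1:ZMod 2) else 0) = (if q then 1 else 0) + 1 := by
  cases p <;> cases q <;> simp_all <;> decide

/-- Given six pairwise distinct integers arranged in two ordered triples
`(a, b, c)` and `(d, e, f)`, one can exchange one entry of the first triple with
one entry of the second triple (keeping all other entries in place) so that the
parities of both triples are flipped. -/
theorem exists_swap_flipping_both_parities (a b c d e f : ℤ)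
    (hdist : ([a, b, c, d, e, f] : List ℤ).Pairwise (· ≠ ·)) :
    ∃ i j : Fin 3,
      tripleParity (Function.update ![a, b, c] i (![d, e, f] j)) =
        tripleParity ![a, b, c] + 1 ∧
      tripleParity (Function.update ![d, e, f] j (![a, b, c] i)) =
        tripleParity ![d, e, f] + 1 := by
  have hnd : ([a,b,c,d,e,f] : List ℤ).Nodup := hdist
  simp only [List.pairwise_cons, List.mem_cons, List.mem_singleton, List.not_mem_nil,
    forall_eq_or_imp, forall_eq, and_true, ne_eq] at hdist
  obtain ⟨⟨hab, hac, had, hae, haf⟩, ⟨hbc, hbd, hbe, hbf⟩, ⟨hcd, hce, hcf⟩, ⟨hde, hdf⟩, hef, -⟩ :=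
    hdist
  set S : Finset ℤ := ([a,b,c,d,e,f] : List ℤ).toFinset with hSdef
  have hS : S.card = 6 := by rw [hSdef, List.toFinset_card_of_nodup hnd]; rfl
  set φ := (S.orderIsoOfFin hS).symm with hφ
  have cmp : ∀ x y : S, (x:ℤ) < y ↔ φ x < φ y := by
    intro x y
    constructor
    · intro h; exact φ.lt_iff_lt.2 h
    · intro h; exact φ.lt_iff_lt.1 h
  have ha : a ∈ S := by simp [hSdef]
  have hb : b ∈ S := by simp [hSdef]
  have hc : c ∈ S := by simp [hSdef]
  have hd : d ∈ S := by simp [hSdef]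
  have he : e ∈ S := by simp [hSdef]
  have hf : f ∈ S := by simp [hSdef]
  have B : ∀ (x y z : ℤ) (hx : x ∈ S) (hy : y ∈ S) (hz : z ∈ S),
      tripleParity ![x,y,z] = if tpb (φ ⟨x,hx⟩) (φ ⟨y,hy⟩) (φ ⟨z,hz⟩) then 1 else 0 :=
    fun x y z hx hy hz =>
      bridge _ _ _ _ _ _ (cmp ⟨y,hy⟩ ⟨x,hx⟩) (cmp ⟨z,hz⟩ ⟨x,hx⟩) (cmp ⟨z,hz⟩ ⟨y,hy⟩)
  have inj : ∀ {x y : ℤ} (hx : x ∈ S) (hy : y ∈ S), x ≠ y → φ ⟨x,hx⟩ ≠ φ ⟨y,hy⟩ := by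
    intro x y hx hy hne h
    exact hne (by simpa using congrArg Subtype.val (φ.injective h))
  have hok := key (φ ⟨a,ha⟩) (φ ⟨b,hb⟩) (φ ⟨c,hc⟩) (φ ⟨d,hd⟩) (φ ⟨e,he⟩) (φ ⟨f,hf⟩)
  have ne0 : (φ ⟨a,ha⟩ == φ ⟨b,hb⟩) = false := beq_eq_false_iff_ne.2 (inj ha hb hab)
  have ne1 : (φ ⟨a,ha⟩ == φ ⟨c,hc⟩) = false := beq_eq_false_iff_ne.2 (inj ha hc hac)
  have ne2 : (φ ⟨a,ha⟩ == φ ⟨d,hd⟩) = false := beq_eq_false_iff_ne.2 (inj ha hd had)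
  have ne3 : (φ ⟨a,ha⟩ == φ ⟨e,he⟩) = false := beq_eq_false_iff_ne.2 (inj ha he hae)
  have ne4 : (φ ⟨a,ha⟩ == φ ⟨f,hf⟩) = false := beq_eq_false_iff_ne.2 (inj ha hf haf.1)
  have ne5 : (φ ⟨b,hb⟩ == φ ⟨c,hc⟩) = false := beq_eq_false_iff_ne.2 (inj hb hc hbc)
  have ne6 : (φ ⟨b,hb⟩ == φ ⟨d,hd⟩) = false := beq_eq_false_iff_ne.2 (inj hb hd hbd)
  have ne7 : (φ ⟨b,hb⟩ == φ ⟨e,he⟩) = false := beq_eq_false_iff_ne.2 (inj hb he hbe)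
  have ne8 : (φ ⟨b,hb⟩ == φ ⟨f,hf⟩) = false := beq_eq_false_iff_ne.2 (inj hb hf hbf.1)
  have ne9 : (φ ⟨c,hc⟩ == φ ⟨d,hd⟩) = false := beq_eq_false_iff_ne.2 (inj hc hd hcd)
  have ne10 : (φ ⟨c,hc⟩ == φ ⟨e,he⟩) = false := beq_eq_false_iff_ne.2 (inj hc he hce)
  have ne11 : (φ ⟨c,hc⟩ == φ ⟨f,hf⟩) = false := beq_eq_false_iff_ne.2 (inj hc hf hcf.1)
  have ne12 : (φ ⟨d,hd⟩ == φ ⟨e,he⟩) = false := beq_eq_false_iff_ne.2 (inj hd he hde)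
  have ne13 : (φ ⟨d,hd⟩ == φ ⟨f,hf⟩) = false := beq_eq_false_iff_ne.2 (inj hd hf hdf.1)
  have ne14 : (φ ⟨e,he⟩ == φ ⟨f,hf⟩) = false := beq_eq_false_iff_ne.2 (inj he hf hef.1)
  simp only [ok2, ne0, ne1, ne2, ne3, ne4, ne5, ne6, ne7, ne8, ne9, ne10, ne11, ne12, ne13,
    ne14, Bool.false_or] at hok
  rw [ok] at hok
  rename' hok => h
  simp only [Bool.or_eq_true, Bool.and_eq_true, bne_iff_ne, ne_eq] at h
  rcases h with ((((((((⟨h1,h2⟩|⟨h1,h2⟩)|⟨h1,h2⟩)|⟨h1,h2⟩)|⟨h1,h2⟩)|⟨h1,h2⟩)|⟨h1,h2⟩)|⟨h1,h2⟩)|⟨h1,h2⟩)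
  · refine ⟨0, 0, ?_, ?_⟩
    · rw [show (![d,e,f] : Fin 3 → ℤ) 0 = d from rfl, upd0,
        B d b c hd hb hc, B a b c ha hb hc]
      exact final h1
    · rw [show (![a,b,c] : Fin 3 → ℤ) 0 = a from rfl, upd0,
        B a e f ha he hf, B d e f hd he hf]
      exact final h2
  · refine ⟨0, 1, ?_, ?_⟩
    · rw [show (![d,e,f] : Fin 3 → ℤ) 1 = e from rfl, upd0,
        B e b c he hb hc, B a b c ha hb hc]
      exact final h1
    · rw [show (![a,b,c] : Fin 3 → ℤ) 0 = a from rfl, upd1,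
        B d a f hd ha hf, B d e f hd he hf]
      exact final h2
  · refine ⟨0, 2, ?_, ?_⟩
    · rw [show (![d,e,f] : Fin 3 → ℤ) 2 = f from rfl, upd0,
        B f b c hf hb hc, B a b c ha hb hc]
      exact final h1
    · rw [show (![a,b,c] : Fin 3 → ℤ) 0 = a from rfl, upd2,
        B d e a hd he ha, B d e f hd he hf]
      exact final h2
  · refine ⟨1, 0, ?_, ?_⟩
    · rw [show (![d,e,f] : Fin 3 → ℤ) 0 = d from rfl, upd1,
        B a d c ha hd hc, B a b c ha hb hc]
      exact final h1
    · rw [show (![a,b,c] : Fin 3 → ℤ) 1 = b from rfl, upd0,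
        B b e f hb he hf, B d e f hd he hf]
      exact final h2
  · refine ⟨1, 1, ?_, ?_⟩
    · rw [show (![d,e,f] : Fin 3 → ℤ) 1 = e from rfl, upd1,
        B a e c ha he hc, B a b c ha hb hc]
      exact final h1
    · rw [show (![a,b,c] : Fin 3 → ℤ) 1 = b from rfl, upd1,
        B d b f hd hb hf, B d e f hd he hf]
      exact final h2
  · refine ⟨1, 2, ?_, ?_⟩
    · rw [show (![d,e,f] : Fin 3 → ℤ) 2 = f from rfl, upd1,
        B a f c ha hf hc, B a b c ha hb hc]
      exact final h1
    · rw [show (![a,b,c] : Fin 3 → ℤ) 1 = b from rfl, upd2,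
        B d e b hd he hb, B d e f hd he hf]
      exact final h2
  · refine ⟨2, 0, ?_, ?_⟩
    · rw [show (![d,e,f] : Fin 3 → ℤ) 0 = d from rfl, upd2,
        B a b d ha hb hd, B a b c ha hb hc]
      exact final h1
    · rw [show (![a,b,c] : Fin 3 → ℤ) 2 = c from rfl, upd0,
        B c e f hc he hf, B d e f hd he hf]
      exact final h2
  · refine ⟨2, 1, ?_, ?_⟩
    · rw [show (![d,e,f] : Fin 3 → ℤ) 1 = e from rfl, upd2,
        B a b e ha hb he, B a b c ha hb hc]
      exact final h1
    · rw [show (![a,b,c] : Fin 3 → ℤ) 2 = c from rfl, upd1,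
        B d c f hd hc hf, B d e f hd he hf]
      exact final h2
  · refine ⟨2, 2, ?_, ?_⟩
    · rw [show (![d,e,f] : Fin 3 → ℤ) 2 = f from rfl, upd2,
        B a b f ha hb hf, B a b c ha hb hc]
      exact final h1
    · rw [show (![a,b,c] : Fin 3 → ℤ) 2 = c from rfl, upd2,
        B d e c hd he hc, B d e f hd he hf]
      exact final h2
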